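/- Let A_ρ ⊆ M_n(ℂ) be a structural matrix algebra such that every central class of A_ρ has at least 2 elements. Then every injective map φ : A_ρ → M_n(ℂ) satisfying φ(XY) = φ(X)φ(Y) for all X, Y ∈ A_ρ is additive. -/

import Mathlib

/-- The structural matrix algebra determined by a quasi-order `ρ` on `Fin n`. -/
def structuralMatrixAlgebra {n : ℕ} (ρ : Fin n → Fin n → Prop) :
    Set (Matrix (Fin n) (Fin n) ℂ) :=
  {X | ∀ i j, ¬ ρ i j → X i j = 0}

/-- The equivalence relation `≈` whose classes are the central classes of `A_ρ`:
the reflexive-transitive closure of `i ≈₀ j ⟺ (i,j) ∈ ρ ∨ (j,i) ∈ ρ`. -/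
def centralRel {n : ℕ} (ρ : Fin n → Fin n → Prop) : Fin n → Fin n → Prop :=
  Relation.ReflTransGen (fun a b => ρ a b ∨ ρ b a)

/-- From a nontrivial `centralRel` chain we can extract an immediate neighbor. -/
lemma exists_neighbor {n : ℕ} (ρ : Fin n → Fin n → Prop) (i j : Fin n)
    (h : centralRel ρ i j) (hne : j ≠ i) : ∃ k, k ≠ i ∧ (ρ i k ∨ ρ k i) := by
  unfold centralRel at h
  revert hne
  induction h using Relation.ReflTransGen.head_induction_on with
  | refl => exact fun hne => absurd rfl hne
  | @head a c h' hrest ih =>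
    intro hne
    rcases eq_or_ne c a with rfl | hca
    · exact ih hne
    · exact ⟨c, hca, h'⟩

theorem multiplicative_map_additive {n : ℕ} (ρ : Fin n → Fin n → Prop)
    (hrefl : ∀ i, ρ i i) (htrans : ∀ i j k, ρ i j → ρ j k → ρ i k)
    (hclass : ∀ i : Fin n, ∃ j, j ≠ i ∧ centralRel ρ i j)
    (φ : Matrix (Fin n) (Fin n) ℂ → Matrix (Fin n) (Fin n) ℂ)
    (hinj : Set.InjOn φ (structuralMatrixAlgebra ρ))
    (hmul : ∀ X ∈ structuralMatrixAlgebra ρ, ∀ Y ∈ structuralMatrixAlgebra ρ,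
      φ (X * Y) = φ X * φ Y) :
    ∀ X ∈ structuralMatrixAlgebra ρ, ∀ Y ∈ structuralMatrixAlgebra ρ,
      φ (X + Y) = φ X + φ Y := by
  classical
  rcases Nat.eq_zero_or_pos n with hn | hn
  · subst hn
    intro X _ Y _
    apply Subsingleton.elim
  haveI : Nonempty (Fin n) := ⟨⟨0, hn⟩⟩
  -- Basic membership facts
  have memE : ∀ {i j : Fin n} (c : ℂ), ρ i j →
      Matrix.single i j c ∈ structuralMatrixAlgebra ρ := by
    intro i j c h k l hkl
    apply Matrix.single_apply_of_ne
    rintro ⟨rfl, rfl⟩; exact hkl h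
  have mem0 : (0 : Matrix (Fin n) (Fin n) ℂ) ∈ structuralMatrixAlgebra ρ :=
    fun _ _ _ => rfl
  have memAdd : ∀ {X Y : Matrix (Fin n) (Fin n) ℂ},
      X ∈ structuralMatrixAlgebra ρ → Y ∈ structuralMatrixAlgebra ρ →
      X + Y ∈ structuralMatrixAlgebra ρ := by
    intro X Y hX hY i j hij
    rw [Matrix.add_apply, hX i j hij, hY i j hij, add_zero]
  have memMul : ∀ {X Y : Matrix (Fin n) (Fin n) ℂ},
      X ∈ structuralMatrixAlgebra ρ → Y ∈ structuralMatrixAlgebra ρ →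
      X * Y ∈ structuralMatrixAlgebra ρ := by
    intro X Y hX hY i j hij
    rw [Matrix.mul_apply]
    apply Finset.sum_eq_zero
    intro k _
    by_cases h1 : ρ i k
    · by_cases h2 : ρ k j
      · exact absurd (htrans _ _ _ h1 h2) hij
      · rw [hY k j h2, mul_zero]
    · rw [hX i k h1, zero_mul]
  -- the image of 0 is an absorbing idempotent
  have hqF : ∀ X ∈ structuralMatrixAlgebra ρ, φ 0 * φ X = φ 0 := by
    intro X hX
    have := hmul 0 mem0 X hX
    rw [zero_mul] at this
    exact this.symm
  have hFq : ∀ X ∈ structuralMatrixAlgebra ρ, φ X * φ 0 = φ 0 := by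
    intro X hX
    have := hmul X hX 0 mem0
    rw [mul_zero] at this
    exact this.symm
  -- the corrected idempotents
  set F : Fin n → Matrix (Fin n) (Fin n) ℂ :=
    fun i => φ (Matrix.single i i 1) - φ 0 with hFdef
  have hFmul : ∀ i j, F i * F j = if i = j then F i else 0 := by
    intro i j
    have h1 : φ (Matrix.single i i 1) * φ (Matrix.single j j 1)
        = if i = j then φ (Matrix.single i i 1) else φ 0 := by
      rw [← hmul _ (memE 1 (hrefl i)) _ (memE 1 (hrefl j))]
      rcases eq_or_ne i j with rfl | hij
      · rw [if_pos rfl, Matrix.single_mul_single_same, one_mul]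
      · rw [if_neg hij, Matrix.single_mul_single_of_ne (h := hij)]
    rw [hFdef]
    simp only [sub_mul, mul_sub, h1, hqF _ (memE 1 (hrefl j)),
      hFq _ (memE 1 (hrefl i)), hqF _ mem0]
    rcases eq_or_ne i j with rfl | hij
    · rw [if_pos rfl, if_pos rfl]
      abel
    · rw [if_neg hij, if_neg hij]
      abel
  have hFne : ∀ i, F i ≠ 0 := by
    intro i h
    rw [hFdef, sub_eq_zero] at h
    have := hinj (memE 1 (hrefl i)) mem0 h
    have h2 := congrFun (congrFun this i) i
    rw [Matrix.single_apply_same] at h2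
    exact one_ne_zero (h2.trans rfl)
  -- choose eigenvectors
  have hvex : ∀ i, ∃ x : Fin n → ℂ, Matrix.mulVec (F i) x ≠ 0 := by
    intro i
    by_contra h
    push_neg at h
    apply hFne i
    ext k l
    have := congrFun (h (Pi.single l 1)) k
    simpa [Matrix.mulVec_single] using this
  set v : Fin n → (Fin n → ℂ) := fun i => Matrix.mulVec (F i) ((hvex i).choose) with hvdef
  have hvne : ∀ i, v i ≠ 0 := fun i => (hvex i).choose_spec
  have hFv : ∀ i j, Matrix.mulVec (F i) (v j) = if i = j then v j else 0 := by
    intro i j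
    rw [hvdef]
    simp only [Matrix.mulVec_mulVec, hFmul i j]
    rcases eq_or_ne i j with rfl | hij
    · rw [if_pos rfl, if_pos rfl]
    · rw [if_neg hij, if_neg hij, Matrix.zero_mulVec]
  -- linear independence, basis
  have hli : LinearIndependent ℂ v := by
    rw [Fintype.linearIndependent_iff]
    intro c hc j
    have h1 : (F j).mulVecLin (∑ i, c i • v i) = 0 := by rw [hc, map_zero]
    rw [map_sum] at h1
    simp only [map_smul, Matrix.mulVecLin_apply, hFv] at h1
    simp only [smul_ite, smul_zero, Finset.sum_ite_eq, Finset.mem_univ, if_true] at h1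
    rcases smul_eq_zero.mp h1 with h | h
    · exact h
    · exact absurd h (hvne j)
  have hcard : Fintype.card (Fin n) = Module.finrank ℂ (Fin n → ℂ) := by
    simp [Module.finrank_fin_fun]
  let b : Module.Basis (Fin n) ℂ (Fin n → ℂ) := basisOfLinearIndependentOfCardEqFinrank hli hcard
  have hb : ⇑b = v := coe_basisOfLinearIndependentOfCardEqFinrank hli hcard
  -- φ 0 = 0
  have hq0 : φ 0 = 0 := by
    have hqv : ∀ i, Matrix.mulVec (φ 0) (v i) = 0 := by
      intro i
      rw [hvdef]
      simp only [Matrix.mulVec_mulVec]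
      have h2 : φ 0 * F i = 0 := by
        rw [hFdef]
        simp only [mul_sub, hqF _ (memE 1 (hrefl i)), hqF _ mem0, sub_self]
      rw [h2, Matrix.zero_mulVec]
    have hlin : (φ 0).mulVecLin = (0 : Matrix (Fin n) (Fin n) ℂ).mulVecLin := by
      apply b.ext
      intro i
      rw [hb]
      simp [Matrix.mulVecLin_apply, hqv i]
    ext k l
    have := congrFun (congrArg (fun f => f (Pi.single l 1)) (congrArg DFunLike.coe hlin)) k
    simpa [Matrix.mulVecLin_apply, Matrix.mulVec_single] using this
  have hF' : ∀ i, φ (Matrix.single i i 1) = F i := by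
    intro i; rw [hFdef]; simp [hq0]
  -- the change-of-basis matrix
  haveI : Invertible ((Pi.basisFun ℂ (Fin n)).toMatrix ⇑b) :=
    (Pi.basisFun ℂ (Fin n)).invertibleToMatrix b
  set S : Matrix (Fin n) (Fin n) ℂ := (Pi.basisFun ℂ (Fin n)).toMatrix ⇑b with hSdef
  have hS : ∀ k i, S k i = v i k := by
    intro k i
    rw [hSdef, Module.Basis.toMatrix_apply, hb, Pi.basisFun_repr]
  have hFS : ∀ i, F i * S = S * Matrix.single i i 1 := by
    intro i
    ext k l
    have hL : (F i * S) k l = (Matrix.mulVec (F i) (v l)) k := by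
      simp only [Matrix.mul_apply, Matrix.mulVec, dotProduct, hS]
    rw [hL, hFv]
    rcases eq_or_ne l i with rfl | hli
    · rw [if_pos rfl, Matrix.mul_single_apply_same, hS, mul_one]
    · rw [if_neg (Ne.symm hli), Matrix.mul_single_apply_of_ne _ _ _ _ _ hli]
      rfl
  -- the conjugated map
  set ψ : Matrix (Fin n) (Fin n) ℂ → Matrix (Fin n) (Fin n) ℂ :=
    fun Z => ⅟S * φ Z * S with hψdef
  have hback : ∀ Z, S * ψ Z * ⅟S = φ Z := by
    intro Z
    rw [hψdef]
    simp only []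
    rw [← mul_assoc, ← mul_assoc, mul_invOf_self, one_mul, mul_assoc, mul_invOf_self, mul_one]
  have hψmul : ∀ X ∈ structuralMatrixAlgebra ρ, ∀ Y ∈ structuralMatrixAlgebra ρ,
      ψ (X * Y) = ψ X * ψ Y := by
    intro X hX Y hY
    rw [hψdef]
    simp only []
    rw [hmul X hX Y hY]
    calc ⅟S * (φ X * φ Y) * S = ⅟S * (φ X * (S * ⅟S) * φ Y) * S := by
          rw [mul_invOf_self, mul_one]
      _ = ⅟S * φ X * S * (⅟S * φ Y * S) := by simp only [mul_assoc]
  have hψinj : ∀ X ∈ structuralMatrixAlgebra ρ, ∀ Y ∈ structuralMatrixAlgebra ρ,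
      ψ X = ψ Y → X = Y := by
    intro X hX Y hY h
    apply hinj hX hY
    rw [← hback X, ← hback Y, h]
  have hψ0 : ψ 0 = 0 := by
    rw [hψdef]; simp only []; rw [hq0, mul_zero, zero_mul]
  have hψE : ∀ i, ψ (Matrix.single i i 1) = Matrix.single i i 1 := by
    intro i
    rw [hψdef]
    simp only []
    rw [hF' i, mul_assoc, hFS i, ← mul_assoc, invOf_mul_self, one_mul]
  -- corner identity
  have hcorner : ∀ (N : Matrix (Fin n) (Fin n) ℂ) (i j : Fin n),
      Matrix.single i i 1 * N * Matrix.single j j 1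
        = Matrix.single i j (N i j) := by
    intro N i j
    ext k l
    rcases eq_or_ne k i with rfl | hk
    · rcases eq_or_ne l j with rfl | hl
      · rw [Matrix.mul_single_apply_same,
          Matrix.single_mul_apply_same, one_mul, mul_one,
          Matrix.single_apply_same]
      · rw [Matrix.mul_single_apply_of_ne _ _ _ _ _ hl,
          Matrix.single_apply_of_ne]
        rintro ⟨-, rfl⟩; exact hl rfl
    · rw [Matrix.mul_assoc, Matrix.single_mul_apply_of_ne _ _ _ _ _ hk,
        Matrix.single_apply_of_ne]
      rintro ⟨rfl, -⟩; exact hk rfl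
  -- the key entrywise identity
  have hkey : ∀ X ∈ structuralMatrixAlgebra ρ, ∀ i j : Fin n,
      ψ (Matrix.single i j (X i j)) = Matrix.single i j (ψ X i j) := by
    intro X hX i j
    have h1 : Matrix.single i j (X i j)
        = Matrix.single i i 1 * X * Matrix.single j j 1 :=
      (hcorner X i j).symm
    rw [h1, hψmul _ (memMul (memE 1 (hrefl i)) hX) _ (memE 1 (hrefl j)),
      hψmul _ (memE 1 (hrefl i)) _ hX, hψE, hψE, hcorner]
  -- the entry functions
  set g : Fin n → Fin n → ℂ → ℂ :=
    fun i j c => ψ (Matrix.single i j c) i j with hgdef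
  have hg0 : ∀ i j, g i j 0 = 0 := by
    intro i j
    rw [hgdef]
    simp only []
    rw [Matrix.single_zero, hψ0, Matrix.zero_apply]
  have hentry : ∀ X ∈ structuralMatrixAlgebra ρ, ∀ k l : Fin n,
      ψ X k l = g k l (X k l) := by
    intro X hX k l
    have := congrFun (congrFun (hkey X hX k l) k) l
    rw [Matrix.single_apply_same] at this
    exact this.symm
  have hsupp : ∀ (i j : Fin n) (c : ℂ), ρ i j →
      ψ (Matrix.single i j c) = Matrix.single i j (g i j c) := by
    intro i j c h
    have := hkey _ (memE c h) i j
    rwa [Matrix.single_apply_same] at this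
  have ginj : ∀ (i j : Fin n) (c d : ℂ), ρ i j → g i j c = g i j d → c = d := by
    intro i j c d h he
    have h1 : ψ (Matrix.single i j c) = ψ (Matrix.single i j d) := by
      rw [hsupp i j c h, hsupp i j d h, he]
    have h2 := hψinj _ (memE c h) _ (memE d h) h1
    have h3 := congrFun (congrFun h2 i) j
    rwa [Matrix.single_apply_same, Matrix.single_apply_same] at h3
  have gmul : ∀ (i j k : Fin n) (c d : ℂ), ρ i j → ρ j k →
      g i k (c * d) = g i j c * g j k d := by
    intro i j k c d h1 h2
    have h3 : ψ (Matrix.single i j c * Matrix.single j k d)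
        = ψ (Matrix.single i j c) * ψ (Matrix.single j k d) :=
      hψmul _ (memE c h1) _ (memE d h2)
    rw [Matrix.single_mul_single_same, hsupp i k (c*d) (htrans _ _ _ h1 h2),
      hsupp i j c h1, hsupp j k d h2, Matrix.single_mul_single_same] at h3
    have h4 := congrFun (congrFun h3 i) k
    rwa [Matrix.single_apply_same, Matrix.single_apply_same] at h4
  have gne : ∀ (i j : Fin n), ρ i j → g i j 1 ≠ 0 := by
    intro i j h hzero
    have : (1 : ℂ) = 0 := ginj i j 1 0 h (by rw [hzero, hg0])
    exact one_ne_zero this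
  -- additivity of the off-diagonal entry functions
  have hoff : ∀ (i j : Fin n), ρ i j → i ≠ j → ∀ c d : ℂ,
      g i j (c + d) = g i j c + g i j d := by
    intro i j h hij c d
    set X : Matrix (Fin n) (Fin n) ℂ :=
      Matrix.single i i c + Matrix.single i j 1 with hXdef
    set Y : Matrix (Fin n) (Fin n) ℂ :=
      Matrix.single i j 1 + Matrix.single j j d with hYdef
    have hXmem : X ∈ structuralMatrixAlgebra ρ := memAdd (memE c (hrefl i)) (memE 1 h)
    have hYmem : Y ∈ structuralMatrixAlgebra ρ := memAdd (memE 1 h) (memE d (hrefl j))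
    have hXY : X * Y = Matrix.single i j (c + d) := by
      rw [hXdef, hYdef, add_mul, mul_add, mul_add,
        Matrix.single_mul_single_same, Matrix.single_mul_single_same,
        Matrix.single_mul_single_of_ne (h := hij),
        Matrix.single_mul_single_of_ne (h := (Ne.symm hij)),
        add_zero, zero_add, mul_one, one_mul, ← Matrix.single_add]
    have hψX : ψ X = Matrix.single i i (g i i c) + Matrix.single i j (g i j 1) := by
      ext k l
      rw [hentry X hXmem k l, Matrix.add_apply, hXdef, Matrix.add_apply]
      simp only [Matrix.single, Matrix.of_apply]
      split_ifs with h1 h2 h2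
      · exact absurd (h1.2.trans h2.2.symm) hij
      · obtain ⟨rfl, rfl⟩ := h1
        simp
      · obtain ⟨rfl, rfl⟩ := h2
        simp
      · simp [hg0]
    have hψY : ψ Y = Matrix.single i j (g i j 1) + Matrix.single j j (g j j d) := by
      ext k l
      rw [hentry Y hYmem k l, Matrix.add_apply, hYdef, Matrix.add_apply]
      simp only [Matrix.single, Matrix.of_apply]
      split_ifs with h1 h2 h2
      · exact absurd (h1.1.trans h2.1.symm) hij
      · obtain ⟨rfl, rfl⟩ := h1
        simp
      · obtain ⟨rfl, rfl⟩ := h2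
        simp
      · simp [hg0]
    have hprod : ψ X * ψ Y
        = Matrix.single i j (g i i c * g i j 1 + g i j 1 * g j j d) := by
      rw [hψX, hψY, add_mul, mul_add, mul_add,
        Matrix.single_mul_single_same, Matrix.single_mul_single_same,
        Matrix.single_mul_single_of_ne (h := hij),
        Matrix.single_mul_single_of_ne (h := (Ne.symm hij)),
        add_zero, zero_add, ← Matrix.single_add]
    have hmain : ψ (X * Y) = ψ X * ψ Y := hψmul _ hXmem _ hYmem
    rw [hXY, hsupp i j (c + d) h, hprod] at hmain
    have h5 := congrFun (congrFun hmain i) j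
    rw [Matrix.single_apply_same, Matrix.single_apply_same] at h5
    rw [h5, ← gmul i i j c 1 (hrefl i) h, ← gmul i j j 1 d h (hrefl j), mul_one, one_mul]
  -- additivity of the diagonal entry functions
  have hdiag : ∀ (i : Fin n) (c d : ℂ), g i i (c + d) = g i i c + g i i d := by
    intro i c d
    obtain ⟨j, hji, hcr⟩ := hclass i
    obtain ⟨k, hki, hk⟩ := exists_neighbor ρ i j hcr hji
    rcases hk with h | h
    · have hik : i ≠ k := Ne.symm hki
      have hrep : ∀ x : ℂ, g i k x = g i i x * g i k 1 := by
        intro x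
        rw [← gmul i i k x 1 (hrefl i) h, mul_one]
      have h1 : g i i (c + d) * g i k 1 = (g i i c + g i i d) * g i k 1 := by
        rw [← hrep (c + d), hoff i k h hik, hrep c, hrep d, add_mul]
      exact mul_right_cancel₀ (gne i k h) h1
    · have hrep : ∀ x : ℂ, g k i x = g k i 1 * g i i x := by
        intro x
        rw [← gmul k i i 1 x h (hrefl i), one_mul]
      have h1 : g k i 1 * g i i (c + d) = g k i 1 * (g i i c + g i i d) := by
        rw [← hrep (c + d), hoff k i h hki, hrep c, hrep d, mul_add]
      exact mul_left_cancel₀ (gne k i h) h1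
  -- conclusion
  intro X hX Y hY
  have hXY : X + Y ∈ structuralMatrixAlgebra ρ := memAdd hX hY
  have hψadd : ψ (X + Y) = ψ X + ψ Y := by
    ext k l
    rw [Matrix.add_apply, hentry _ hXY k l, hentry _ hX k l, hentry _ hY k l, Matrix.add_apply]
    by_cases h : ρ k l
    · rcases eq_or_ne k l with rfl | hkl
      · exact hdiag k _ _
      · exact hoff k l h hkl _ _
    · rw [hX k l h, hY k l h]
      simp [hg0]
  rw [← hback (X + Y), hψadd, ← hback X, ← hback Y, mul_add, add_mul]
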